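/- arXiv:2503.22101 — 6 statements merged into one kernel-verified Lean document; each statement's English description precedes it below -/
import Mathlib

section
/- Mutation preserves skew-symmetrizability with the same skew-symmetrizer: if B is an n×n integer matrix and D is a diagonal matrix with positive integer entries such that DB is skew-symmetric, then D·μ_k(B) is also skew-symmetric for every index k. -/
open Matrix

/-- Matrix mutation of an integer matrix in direction `k`. -/
def mutate {n : ℕ} (B : Matrix (Fin n) (Fin n) ℤ) (k : Fin n) : Matrix (Fin n) (Fin n) ℤ :=
  Matrix.of fun i j =>
    if i = k ∨ j = k then -B i j
    else B i j + B i k * max (B k j) 0 + max (-B i k) 0 * B k j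

private lemma key_mutate (di dj dk a b a' b' : ℤ) (hdk : 0 < dk) (hdi : 0 < di) (hdj : 0 < dj)
    (h1 : dk * a' = -(di * a)) (h2 : dk * b = -(dj * b')) :
    dj * (b' * max a' 0 + max (-b') 0 * a') = -(di * (a * max b 0 + max (-a) 0 * b)) := by
  rcases le_total a 0 with ha | ha <;> rcases le_total b 0 with hb | hb
  · have ha' : 0 ≤ a' := by nlinarith
    have hb' : 0 ≤ b' := by nlinarith
    rw [max_eq_left ha', max_eq_right (by linarith : -b' ≤ 0),
        max_eq_right hb, max_eq_left (by linarith : 0 ≤ -a)]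
    apply mul_left_cancel₀ (a := dk * dk) (by positivity)
    linear_combination (dk * dj * b') * h1 - (dk * di * a) * h2
  · have ha' : 0 ≤ a' := by nlinarith
    have hb' : b' ≤ 0 := by nlinarith
    rw [max_eq_left ha', max_eq_left (by linarith : 0 ≤ -b'),
        max_eq_left hb, max_eq_left (by linarith : 0 ≤ -a)]
    ring
  · have ha' : a' ≤ 0 := by nlinarith
    have hb' : 0 ≤ b' := by nlinarith
    rw [max_eq_right ha', max_eq_right (by linarith : -b' ≤ 0),
        max_eq_right hb, max_eq_right (by linarith : -a ≤ 0)]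
    ring
  · have ha' : a' ≤ 0 := by nlinarith
    have hb' : b' ≤ 0 := by nlinarith
    rw [max_eq_right ha', max_eq_left (by linarith : 0 ≤ -b'),
        max_eq_left hb, max_eq_right (by linarith : -a ≤ 0)]
    apply mul_left_cancel₀ (a := dk * dk) (by positivity)
    linear_combination (-(dk * dj * b')) * h1 + (dk * di * a) * h2

/-- Mutation preserves skew-symmetrizability with the same skew-symmetrizer:
if `D = diagonal d` has positive integer entries and `D * B` is skew-symmetric,
then `D * mutate B k` is skew-symmetric for every `k`. -/
theorem mutate_skewSymmetrizer {n : ℕ} (B : Matrix (Fin n) (Fin n) ℤ)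
    (d : Fin n → ℤ) (hd : ∀ i, 0 < d i)
    (hDB : (Matrix.diagonal d * B)ᵀ = -(Matrix.diagonal d * B)) (k : Fin n) :
    (Matrix.diagonal d * mutate B k)ᵀ = -(Matrix.diagonal d * mutate B k) := by
  have hB : ∀ i j, d j * B j i = -(d i * B i j) := by
    intro i j
    have := congrFun (congrFun hDB i) j
    simpa [Matrix.transpose_apply, Matrix.diagonal_mul] using this
  ext i j
  simp only [Matrix.transpose_apply, Matrix.neg_apply, Matrix.diagonal_mul, mutate,
    Matrix.of_apply]
  by_cases hi : i = k <;> by_cases hj : j = k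
  · rw [if_pos (Or.inl hj), if_pos (Or.inl hi), hi, hj]
    linarith [hB k k]
  · rw [if_pos (Or.inr hi), if_pos (Or.inl hi), hi]
    linarith [hB k j]
  · rw [if_pos (Or.inl hj), if_pos (Or.inr hj), hj]
    linarith [hB i k]
  · rw [if_neg (by tauto), if_neg (by tauto)]
    have h2 := key_mutate (d i) (d j) (d k) (B i k) (B k j) (B k i) (B j k)
      (hd k) (hd i) (hd j) (hB i k) (hB j k)
    linear_combination hB i j + h2
end

section
/- Property (M) propagates under cyclic diagram mutation: let Γ be a cyclic weighted directed triangle on vertices i, j, k with positive real weights w_j (on the edge from i to k missing j — i.e., opposite to j), w_k (opposite to k), w_i (opposite to i), forming an oriented 3-cycle. Suppose Γ has property (M) at vertex i, meaning either w_i ≥ max(w_j, w_k) ≥ min(w_j, w_k) > 2, or w_i > max(w_j, w_k) ≥ min(w_j, w_k) ≥ 2. Then the mutated diagram μ_j(Γ), which is again cyclic with the weight opposite vertex j replaced by w_i·w_k − w_j, has property (M) at vertex j. -/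
/-- Property (M) of a cyclic weighted triangle at the vertex whose opposite
edge has weight `a`, the other two weights being `b` and `c`:
either `a ≥ max(b,c) ≥ min(b,c) > 2` or `a > max(b,c) ≥ min(b,c) ≥ 2`. -/
def PropM (a b c : ℝ) : Prop :=
  (max b c ≤ a ∧ 2 < min b c) ∨ (max b c < a ∧ 2 ≤ min b c)

/-- Property (M) propagates under cyclic diagram mutation: if the cyclic
triangle with weights `w_i, w_j, w_k` (weight `w_v` on the edge opposite
vertex `v`) has property (M) at vertex `i`, then `μ_j(Γ)`, the cyclic
triangle with weights `w_i·w_k − w_j` (opposite `j`), `w_i` and `w_k`,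
has property (M) at vertex `j`. -/
theorem propM_mutate (wi wj wk : ℝ) (hwi : 0 < wi) (hwj : 0 < wj) (hwk : 0 < wk)
    (h : PropM wi wj wk) : PropM (wi * wk - wj) wi wk := by
  rcases h with ⟨h1, h2⟩ | ⟨h1, h2⟩
  · have hj1 : wj ≤ wi := le_trans (le_max_left _ _) h1
    have hk1 : wk ≤ wi := le_trans (le_max_right _ _) h1
    have hj2 : 2 < wj := lt_of_lt_of_le h2 (min_le_left _ _)
    have hk2 : 2 < wk := lt_of_lt_of_le h2 (min_le_right _ _)
    left
    refine ⟨max_le ?_ ?_, lt_min ?_ ?_⟩ <;> nlinarith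
  · have hj1 : wj < wi := lt_of_le_of_lt (le_max_left _ _) h1
    have hk1 : wk < wi := lt_of_le_of_lt (le_max_right _ _) h1
    have hj2 : 2 ≤ wj := le_trans h2 (min_le_left _ _)
    have hk2 : 2 ≤ wk := le_trans h2 (min_le_right _ _)
    right
    refine ⟨max_lt ?_ ?_, le_min ?_ ?_⟩ <;> nlinarith
end

section
/- Under property (M), the new weight dominates: if positive reals w_i, w_j, w_k satisfy property (M) at i (i.e., w_i ≥ max(w_j, w_k) ≥ min(w_j, w_k) > 2, or w_i > max(w_j, w_k) ≥ min(w_j, w_k) ≥ 2), then w_i·w_k − w_j > max(w_i, w_k). -/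
/-- Under property (M) at `i`, the new weight after mutation at `j`
dominates: `w_i·w_k − w_j > max(w_i, w_k)`. -/
theorem propM_new_weight_dominates (wi wj wk : ℝ)
    (hwi : 0 < wi) (hwj : 0 < wj) (hwk : 0 < wk)
    (h : PropM wi wj wk) :
    max wi wk < wi * wk - wj := by
  rcases h with ⟨h1, h2⟩ | ⟨h1, h2⟩
  · rw [max_le_iff] at h1
    rw [lt_min_iff] at h2
    rw [max_lt_iff]
    constructor <;> nlinarith [h1.1, h1.2, h2.1, h2.2]
  · rw [max_lt_iff] at h1
    rw [le_min_iff] at h2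
    rw [max_lt_iff]
    constructor <;> nlinarith [h1.1, h1.2, h2.1, h2.2]
end

section
/- d-vector recursion in direction k for a rank-3 example: consider the cyclic exchange matrix B with b_{12} = b_{21} = b_{13} = b_{31} = b_{23} = b_{32} = 2 arranged so the associated diagram is the oriented triangle with all weights 2 (the Markov quiver). Define vectors d₁, d₂, d₃ ∈ ℤ³ with d_i = −e_i initially, and update along a reduced mutation sequence i₁, …, i_n via d_{i_k} ↦ −d_{i_k} + max(Σ_j [b_{j,i_k}]_+ d_j, Σ_j [−b_{j,i_k}]_+ d_j) (componentwise max), where b is the current exchange matrix, the matrix also being mutated at each step. Then after any nonempty reduced sequence of such updates, the three resulting vectors satisfy: for the last mutated index i_n, d_{i_n} ≥ 0 componentwise. -/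
/-- The exchange matrix of the Markov quiver: oriented 3-cycle with all
double arrows. -/
def markovB : Matrix (Fin 3) (Fin 3) ℤ := !![0, -2, 2; 2, 0, -2; -2, 2, 0]

/-- Initial d-vectors: `d_i = -e_i`. -/
def d0 : Fin 3 → Fin 3 → ℤ := fun i j => if j = i then -1 else 0

/-- One d-vector update at direction `k`:
`d_k ↦ -d_k + max(Σ_i [b_{ik}]_+ d_i, Σ_i [-b_{ik}]_+ d_i)` (componentwise max). -/
def dStep (B : Matrix (Fin 3) (Fin 3) ℤ) (d : Fin 3 → Fin 3 → ℤ) (k : Fin 3) :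
    Fin 3 → Fin 3 → ℤ :=
  Function.update d k fun c =>
    -(d k c) + max (∑ i, max (B i k) 0 * d i c) (∑ i, max (-B i k) 0 * d i c)

/-- One mutation step on the pair (exchange matrix, d-vectors). -/
def step (p : Matrix (Fin 3) (Fin 3) ℤ × (Fin 3 → Fin 3 → ℤ)) (k : Fin 3) :
    Matrix (Fin 3) (Fin 3) ℤ × (Fin 3 → Fin 3 → ℤ) :=
  (mutate p.1 k, dStep p.1 p.2 k)

/-- Running a mutation sequence from the initial Markov seed. -/
def run (l : List (Fin 3)) : Matrix (Fin 3) (Fin 3) ℤ × (Fin 3 → Fin 3 → ℤ) :=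
  l.foldl step (markovB, d0)

lemma mutate_markov : ∀ k : Fin 3, mutate markovB k = -markovB := by decide

lemma mutate_neg_markov : ∀ k : Fin 3, mutate (-markovB) k = markovB := by decide

lemma step_inv (B : Matrix (Fin 3) (Fin 3) ℤ) (d : Fin 3 → Fin 3 → ℤ) (k k' : Fin 3)
    (hB : B = markovB ∨ B = -markovB)
    (h0 : ∀ c, 0 ≤ d k c) (hdom : ∀ j c, d j c ≤ d k c) (hkk' : k' ≠ k) :
    (∀ j c, dStep B d k' j c ≤ dStep B d k' k' c) ∧ (∀ c, 0 ≤ dStep B d k' k' c) := by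
  have key : ∀ c, dStep B d k' k' c = -(d k' c) + 2 * d k c := by
    intro c
    have hk : k = 0 ∨ k = 1 ∨ k = 2 := by omega
    have hk' : k' = 0 ∨ k' = 1 ∨ k' = 2 := by omega
    rcases hB with rfl | rfl <;> rcases hk with rfl | rfl | rfl <;>
        rcases hk' with rfl | rfl | rfl <;>
      first
        | exact absurd rfl hkk'
        | (simp only [dStep, Function.update_self, Fin.sum_univ_three]
           norm_num [markovB, Matrix.neg_apply, Matrix.cons_val_two, Matrix.vecHead, Matrix.vecTail]
           all_goals linarith [hdom 0 c, hdom 1 c, hdom 2 c])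
  constructor
  · intro j c
    rw [key c]
    rcases eq_or_ne j k' with rfl | hj
    · linarith [hdom j c, h0 c, key c, (dStep B d j j c).le_refl]
    · rw [show dStep B d k' j c = d j c from Function.update_of_ne hj _ d ▸ rfl]
      linarith [hdom j c, hdom k' c]
  · intro c
    rw [key c]
    linarith [hdom k' c, h0 c]

lemma base_inv : ∀ a : Fin 3,
    (((run [a]).1 = markovB ∨ (run [a]).1 = -markovB) ∧
      (∀ j c, (run [a]).2 j c ≤ (run [a]).2 a c) ∧
      (∀ c, 0 ≤ (run [a]).2 a c)) := by decide

lemma main_inv : ∀ (l : List (Fin 3)), l.Chain' (· ≠ ·) → ∀ (hne : l ≠ []),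
    ((run l).1 = markovB ∨ (run l).1 = -markovB) ∧
    (∀ j c, (run l).2 j c ≤ (run l).2 (l.getLast hne) c) ∧
    (∀ c, 0 ≤ (run l).2 (l.getLast hne) c) := by
  intro l
  induction l using List.reverseRecOn with
  | nil => intro _ hne; exact absurd rfl hne
  | append_singleton l a ih =>
    intro hred hne
    have hlast : (l ++ [a]).getLast hne = a := List.getLast_append _
    rw [hlast]
    have hrw : run (l ++ [a]) = step (run l) a := by
      simp [run, List.foldl_append]
    rcases eq_or_ne l [] with rfl | hl
    · simpa using base_inv a
    · obtain ⟨h1, _, h3⟩ := List.isChain_append.mp hred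
      have hne' : l.getLast hl ≠ a := by
        apply h3
        · rw [List.getLast?_eq_getLast hl]; rfl
        · rfl
      obtain ⟨hB, hdom, h0⟩ := ih h1 hl
      have hs := step_inv (run l).1 (run l).2 (l.getLast hl) a hB h0 hdom (Ne.symm hne')
      refine ⟨?_, ?_, ?_⟩
      · rw [hrw]
        rcases hB with hB | hB <;> rw [step, hB]
        · exact Or.inr (mutate_markov a)
        · exact Or.inl (mutate_neg_markov a)
      · intro j c; rw [hrw]; exact hs.1 j c
      · intro c; rw [hrw]; exact hs.2 c

/-- After any nonempty reduced mutation sequence in the Markov quiver, the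
d-vector at the last mutated index is componentwise nonnegative. -/
theorem markov_last_dvector_nonneg (l : List (Fin 3)) (hne : l ≠ [])
    (hred : l.Chain' (· ≠ ·)) (c : Fin 3) :
    0 ≤ (run l).2 (l.getLast hne) c :=
  (main_inv l hred hne).2.2 c
end

section
/- Weight-minimality in mutation-cyclic rank 3 with a > 2 and ab > 2c: let Γ be the cyclic triangle with weights a, b, c where 2 < a ≤ b ≤ c and ab > 2c. Then the mutation of Γ at vertex 2 is again a cyclic triangle with weights a, b, ab − c, its total weight a + b + (ab − c) is strictly greater than a + b + c, and it has property (M) at vertex 2. -/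
/-- Mutation-cyclic rank 3 with `2 < a ≤ b ≤ c` and `ab > 2c`: mutating the
cyclic triangle with weights `a, b, c` at vertex `2` yields again a cyclic
triangle with weights `a, b, ab − c` (so `ab − c > 0`), of strictly larger
total weight, having property (M) at vertex `2`. -/
theorem mutation_cyclic_case (a b c : ℝ) (ha : 2 < a) (hab : a ≤ b) (hbc : b ≤ c)
    (h : 2 * c < a * b) :
    0 < a * b - c ∧ a + b + c < a + b + (a * b - c) ∧ PropM (a * b - c) a b := by
  have hc : b < a * b - c := by nlinarith
  refine ⟨by nlinarith, by nlinarith, Or.inr ?_⟩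
  constructor
  · simpa [max_eq_right hab] using hc
  · rw [min_eq_left hab]; linarith
end

section
/- Rank-2 type B/C periodicity: in a rank-3 seed whose exchange matrix B has b_{12} = −1, b_{21} = 2 (so b_{12}b_{21} has absolute value 2), all entries in row and column 3 equal to zero, the composite seed mutation (μ₂μ₁)³ applied to the cluster (x₁, x₂, x₃) in ℚ(x₁, x₂, x₃) returns (x₁, x₂, x₃), and the exchange matrix also returns to B. -/
/-- The ambient field `ℚ(x₁, x₂, x₃)`. -/
abbrev AmbientField : Type := FractionRing (MvPolynomial (Fin 3) ℚ)

/-- The initial cluster variables `x₁, x₂, x₃`. -/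
noncomputable def xInit : Fin 3 → AmbientField := fun i =>
  algebraMap (MvPolynomial (Fin 3) ℚ) AmbientField (MvPolynomial.X i)

/-- One seed mutation step in direction `k`. -/
noncomputable def seedStep (p : Matrix (Fin 3) (Fin 3) ℤ × (Fin 3 → AmbientField))
    (k : Fin 3) : Matrix (Fin 3) (Fin 3) ℤ × (Fin 3 → AmbientField) :=
  (mutate p.1 k,
    Function.update p.2 k
      ((p.2 k)⁻¹ * (∏ j, p.2 j ^ (max (p.1 j k) 0) + ∏ j, p.2 j ^ (max (-p.1 j k) 0))))

/-- The exchange matrix with `b₁₂ = -1`, `b₂₁ = 2`, all other entries `0`. -/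
def Btype2B : Matrix (Fin 3) (Fin 3) ℤ := !![0, -1, 0; 2, 0, 0; 0, 0, 0]

/-- The mutated exchange matrix after one step. -/
def Baux : Matrix (Fin 3) (Fin 3) ℤ := !![0, 1, 0; -2, 0, 0; 0, 0, 0]

lemma mutA : mutate Btype2B 0 = Baux := by decide
lemma mutB : mutate Baux 1 = Btype2B := by decide

lemma stepA (x : Fin 3 → AmbientField) :
    seedStep (Btype2B, x) 0 = (Baux, Function.update x 0 ((x 0)⁻¹ * (x 1 * x 1 + 1))) := by
  unfold seedStep
  rw [mutA]
  congr 1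
  simp [Fin.prod_univ_three, Btype2B, Matrix.vecHead, Matrix.vecTail]
  ring_nf

lemma stepB (x : Fin 3 → AmbientField) :
    seedStep (Baux, x) 1 = (Btype2B, Function.update x 1 ((x 1)⁻¹ * (x 0 + 1))) := by
  unfold seedStep
  rw [mutB]
  congr 1
  simp [Fin.prod_univ_three, Baux, Matrix.vecHead, Matrix.vecTail]

lemma chain {K : Type} [Field K] (a b c d f : K) (ha : a ≠ 0) (hb : b ≠ 0)
    (h1 : b*b+1 ≠ 0) (h2 : a+(b*b+1) ≠ 0) (h3 : a+1 ≠ 0)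
    (h4 : (a+1)*(a+1)+b*b ≠ 0)
    (hc : c = a⁻¹ * (b*b+1))
    (hd : d = b⁻¹ * (c + 1))
    (hf : f = (c+1)⁻¹ * b * ((b*b+1)⁻¹ * a * (d*d+1) + 1)) :
    (d*d+1)⁻¹ * c * (f*f+1) = a := by
  have hab : a*a*b*b ≠ 0 := mul_ne_zero (mul_ne_zero (mul_ne_zero ha ha) hb) hb
  have habb : a*b*b ≠ 0 := mul_ne_zero (mul_ne_zero ha hb) hb
  have hc1 : c + 1 = (a + (b*b+1)) / a := by rw [hc]; field_simp; ring
  have hd2 : d*d+1 = ((b*b+1) * ((a+1)*(a+1)+b*b)) / (a*a*b*b) := by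
    rw [hd, hc1]; field_simp; ring
  have he : (b*b+1)⁻¹ * a * (d*d+1) + 1 = ((a+1) * (a + (b*b+1))) / (a*b*b) := by
    rw [hd2, eq_div_iff habb]
    field_simp [← sq] at h1 ⊢
    ring
  have hf2 : f = (a+1) / b := by
    rw [hf, he, hc1]; field_simp [← sq] at h2 ⊢
  rw [hd2, hc, hf2]
  field_simp [← sq] at h1 h4 ⊢

lemma chain2 {K : Type} [Field K] (a b c d f : K) (ha : a ≠ 0) (hb : b ≠ 0)
    (h1 : b*b+1 ≠ 0) (h2 : a+(b*b+1) ≠ 0) (h3 : a+1 ≠ 0)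
    (h4 : (a+1)*(a+1)+b*b ≠ 0)
    (hc : c = a⁻¹ * (b*b+1))
    (hd : d = b⁻¹ * (c + 1))
    (hf : f = (c+1)⁻¹ * b * ((b*b+1)⁻¹ * a * (d*d+1) + 1)) :
    ((b*b+1)⁻¹ * a * (d*d+1) + 1)⁻¹ * d * ((d*d+1)⁻¹ * c * (f*f+1) + 1) = b := by
  have hab : a*a*b*b ≠ 0 := mul_ne_zero (mul_ne_zero (mul_ne_zero ha ha) hb) hb
  have habb : a*b*b ≠ 0 := mul_ne_zero (mul_ne_zero ha hb) hb
  have hc1 : c + 1 = (a + (b*b+1)) / a := by rw [hc]; field_simp; ring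
  have hd2 : d*d+1 = ((b*b+1) * ((a+1)*(a+1)+b*b)) / (a*a*b*b) := by
    rw [hd, hc1]; field_simp; ring
  have he : (b*b+1)⁻¹ * a * (d*d+1) + 1 = ((a+1) * (a + (b*b+1))) / (a*b*b) := by
    rw [hd2, eq_div_iff habb]
    field_simp [← sq] at h1 ⊢
    ring
  rw [chain a b c d f ha hb h1 h2 h3 h4 hc hd hf, he, hd, hc1]
  field_simp [← sq] at h2 ⊢

lemma algMap_ne_zero (p : MvPolynomial (Fin 3) ℚ)
    (hp : MvPolynomial.eval (fun _ => (1:ℚ)) p ≠ 0) :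
    algebraMap (MvPolynomial (Fin 3) ℚ) AmbientField p ≠ 0 := by
  intro h0
  apply hp
  have : p = 0 := IsFractionRing.injective (MvPolynomial (Fin 3) ℚ) AmbientField
    (by simpa using h0)
  simp [this]

/-- Rank-2 type `B/C` periodicity: `(μ₂μ₁)³`, i.e. mutating in directions
`1, 2, 1, 2, 1, 2` in order, returns both the cluster `(x₁, x₂, x₃)` and the
exchange matrix. -/
theorem typeB_periodicity :
    (([0, 1, 0, 1, 0, 1] : List (Fin 3)).foldl seedStep (Btype2B, xInit)).2 = xInit ∧
    (([0, 1, 0, 1, 0, 1] : List (Fin 3)).foldl seedStep (Btype2B, xInit)).1 = Btype2B := by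
  have ha : xInit 0 ≠ 0 := by
    apply algMap_ne_zero; simp
  have hb : xInit 1 ≠ 0 := by
    apply algMap_ne_zero; simp
  have h1 : xInit 1 * xInit 1 + 1 ≠ 0 := by
    have : xInit 1 * xInit 1 + 1 = algebraMap (MvPolynomial (Fin 3) ℚ) AmbientField
        (MvPolynomial.X 1 * MvPolynomial.X 1 + 1) := by simp [xInit]
    rw [this]; apply algMap_ne_zero; simp
  have h2 : xInit 0 + (xInit 1 * xInit 1 + 1) ≠ 0 := by
    have : xInit 0 + (xInit 1 * xInit 1 + 1) = algebraMap (MvPolynomial (Fin 3) ℚ) AmbientField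
        (MvPolynomial.X 0 + (MvPolynomial.X 1 * MvPolynomial.X 1 + 1)) := by simp [xInit]
    rw [this]; apply algMap_ne_zero; norm_num
  have h3 : xInit 0 + 1 ≠ 0 := by
    have : xInit 0 + 1 = algebraMap (MvPolynomial (Fin 3) ℚ) AmbientField
        (MvPolynomial.X 0 + 1) := by simp [xInit]
    rw [this]; apply algMap_ne_zero; norm_num
  have h4 : (xInit 0 + 1) * (xInit 0 + 1) + xInit 1 * xInit 1 ≠ 0 := by
    have : (xInit 0 + 1) * (xInit 0 + 1) + xInit 1 * xInit 1 =
        algebraMap (MvPolynomial (Fin 3) ℚ) AmbientField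
        ((MvPolynomial.X 0 + 1) * (MvPolynomial.X 0 + 1)
          + MvPolynomial.X 1 * MvPolynomial.X 1) := by simp [xInit]
    rw [this]; apply algMap_ne_zero; norm_num
  simp only [List.foldl_cons, List.foldl_nil, stepA, stepB]
  refine ⟨?_, trivial⟩
  funext i
  fin_cases i
  · simp only [Function.update, Fin.isValue]
    norm_num
    exact chain (xInit 0) (xInit 1) _ _ _ ha hb h1 h2 h3 h4 rfl rfl rfl
  · simp only [Function.update, Fin.isValue]
    norm_num
    exact chain2 (xInit 0) (xInit 1) _ _ _ ha hb h1 h2 h3 h4 rfl rfl rfl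
  · simp [Function.update, Fin.ext_iff]
end
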